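/- Let A ∈ ℝ^{N×M} have rank d, let p be a positive integer, and let A^{⊙p} denote the entrywise p-th power of A. Then rank(A^{⊙p}) ≤ min{N, M, C(d+p−1, p)}, where C(d+p−1, p) is the binomial coefficient. -/

import Mathlib

theorem rank_hadamard_pow_le (N M d p : ℕ) (hp : 0 < p)
    (A : Matrix (Fin N) (Fin M) ℝ) (hA : A.rank = d) :
    (A.map (fun x => x ^ p)).rank ≤ min N (min M (Nat.choose (d + p - 1) p)) := by
  classical
  refine le_min ?_ (le_min ?_ ?_)
  · simpa using (A.map (fun x => x ^ p)).rank_le_card_height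
  · simpa using (A.map (fun x => x ^ p)).rank_le_card_width
  -- rank factorization of A
  set V : Submodule ℝ (Fin N → ℝ) := Submodule.span ℝ (Set.range A.transpose) with hV
  have hfin : Module.finrank ℝ V = d := by
    have := A.rank_eq_finrank_span_cols; rw [hA] at this; exact this.symm
  let b : Module.Basis (Fin d) ℝ V := Module.finBasisOfFinrankEq ℝ V hfin
  let B : Matrix (Fin N) (Fin d) ℝ := fun i k => (b k : Fin N → ℝ) i
  let C : Matrix (Fin d) (Fin M) ℝ := fun k j =>
    b.repr ⟨A.transpose j, Submodule.subset_span (Set.mem_range_self j)⟩ k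
  have hBC : ∀ i j, A i j = ∑ k, B i k * C k j := by
    intro i j
    have hv : (⟨A.transpose j, Submodule.subset_span (Set.mem_range_self j)⟩ : V) =
        ∑ k, C k j • b k := (b.sum_repr _).symm
    have := congrArg (fun v : V => (v : Fin N → ℝ) i) hv
    simp only [Submodule.coe_sum, SetLike.val_smul, Finset.sum_apply, Pi.smul_apply,
      smul_eq_mul] at this
    simpa [Matrix.transpose_apply, B, mul_comm] using this
  -- Hadamard power factorization via the multinomial theorem
  let B' : Matrix (Fin N) (Sym (Fin d) p) ℝ := fun i m => (m.val.map (fun k => B i k)).prod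
  let C' : Matrix (Sym (Fin d) p) (Fin M) ℝ := fun m j =>
    (m.val.countPerms : ℝ) * (m.val.map (fun k => C k j)).prod
  have hfact : A.map (fun x => x ^ p) = B' * C' := by
    ext i j
    rw [Matrix.map_apply, hBC i j, Matrix.mul_apply]
    rw [Finset.sum_pow]
    rw [← Finset.sym_univ (α := Fin d) p]
    refine Finset.sum_congr rfl fun m _ => ?_
    simp only [B', C']
    rw [Multiset.prod_map_mul]
    ring
  rw [hfact]
  calc (B' * C').rank ≤ B'.rank := Matrix.rank_mul_le_left B' C'
    _ ≤ Fintype.card (Sym (Fin d) p) := by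
        simpa using B'.rank_le_card_width
    _ = (d + p - 1).choose p := by
        rw [Sym.card_sym_eq_multichoose, Fintype.card_fin, Nat.multichoose_eq]
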